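/- Let A, Ω be real numbers with Ω² > 1, and suppose Ω is irrational while A is rational (more precisely: suppose 1 and Ω are linearly independent over ℚ and A ∈ ℚ). Let x, y be rational numbers satisfying (1 + x² − 2Ax + 2xΩ)(1 + y² − 2Ay + 2yΩ) = (1 + xy − (x+y)A + (x+y)Ω)². Then x = y. -/

import Mathlib

/-- Case (B2) key identity: if Ω² > 1, Ω² ∈ ℚ, {1, Ω} is ℚ-linearly independent,
A, x, y ∈ ℚ, and (1+x²−2Ax+2xΩ)(1+y²−2Ay+2yΩ) = (1+xy−(x+y)A+(x+y)Ω)², then x = y. -/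
theorem stmt7 (A x y : ℚ) (Ω : ℝ) (hΩ : Ω ^ 2 > 1)
    (hΩQ : ∃ q : ℚ, Ω ^ 2 = (q : ℝ))
    (hindep : LinearIndependent ℚ ![(1 : ℝ), Ω])
    (heq : (1 + (x : ℝ) ^ 2 - 2 * (A : ℝ) * (x : ℝ) + 2 * (x : ℝ) * Ω)
            * (1 + (y : ℝ) ^ 2 - 2 * (A : ℝ) * (y : ℝ) + 2 * (y : ℝ) * Ω)
         = (1 + (x : ℝ) * (y : ℝ) - ((x : ℝ) + (y : ℝ)) * (A : ℝ)
            + ((x : ℝ) + (y : ℝ)) * Ω) ^ 2) :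
    x = y := by
  obtain ⟨q, hq⟩ := hΩQ
  set a : ℚ := (1 - A ^ 2) * (x - y) ^ 2 - q * (x - y) ^ 2 with ha_def
  set b : ℚ := 2 * A * (x - y) ^ 2 with hb_def
  have key : (a : ℝ) * 1 + (b : ℝ) * Ω = 0 := by
    have : (a : ℝ) * 1 + (b : ℝ) * Ω =
        (1 + (x : ℝ) ^ 2 - 2 * (A : ℝ) * (x : ℝ) + 2 * (x : ℝ) * Ω)
          * (1 + (y : ℝ) ^ 2 - 2 * (A : ℝ) * (y : ℝ) + 2 * (y : ℝ) * Ω)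
        - (1 + (x : ℝ) * (y : ℝ) - ((x : ℝ) + (y : ℝ)) * (A : ℝ)
            + ((x : ℝ) + (y : ℝ)) * Ω) ^ 2
        + (Ω ^ 2 - (q : ℝ)) * ((x : ℝ) - (y : ℝ)) ^ 2 := by
      push_cast [ha_def, hb_def]; ring
    rw [this, heq, hq]; ring
  have hab : a = 0 ∧ b = 0 := by
    rw [Fintype.linearIndependent_iff] at hindep
    have := hindep ![a, b] (by
      simp [Fin.sum_univ_two, Matrix.cons_val_zero, Matrix.cons_val_one]
      simpa [smul_eq_mul, Rat.smul_def] using key)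
    exact ⟨this 0, this 1⟩
  have hq1 : (1 : ℚ) < q := by
    have := hΩ
    rw [hq] at this
    exact_mod_cast this
  have h1 : (1 - A ^ 2) * (x - y) ^ 2 - q * (x - y) ^ 2 = 0 := hab.1
  have h2 : 2 * A * (x - y) ^ 2 = 0 := hab.2
  have : (x - y) ^ 2 = 0 := by nlinarith [sq_nonneg (x - y), sq_nonneg (A * (x - y))]
  have := pow_eq_zero_iff (n := 2) (by norm_num) |>.mp this
  linarith [sub_eq_zero.mp this]
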